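/- For all positive natural numbers n and r, we have (1/n^r) · ∑_{k₁=1}^{n} ⋯ ∑_{k_r=1}^{n} gcd(n, k₁·k₂⋯k_r) = ∏_{p prime, p ∣ n} [ ∑_{l=0}^{r} H(ord_p(n), l) · (1 - 1/p)^l ], where the equality is between rational numbers. -/

import Mathlib

open Finset

/-- Canonical representative of `x` mod `d` in `[1, d]`. -/
private def rho (d x : ℕ) : ℕ := (x + d - 1) % d + 1

private lemma rho_mem {d : ℕ} (hd : 0 < d) (x : ℕ) : rho d x ∈ Finset.Icc 1 d := by
  have := Nat.mod_lt (x + d - 1) hd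
  simp only [rho, Finset.mem_Icc]
  omega

private lemma rho_modeq {d : ℕ} (hd : 0 < d) (x : ℕ) : rho d x ≡ x [MOD d] := by
  have h1 : rho d x ≡ (x + d - 1) + 1 [MOD d] := (Nat.mod_modEq (x + d - 1) d).add_right 1
  have h2 : x + d - 1 + 1 = x + d := by omega
  rw [h2] at h1
  exact h1.trans (Nat.add_mod_right x d)

private lemma rho_mod {d : ℕ} (hd : 0 < d) (x : ℕ) : rho d x % d = x % d := rho_modeq hd x

private lemma rho_eq {d x : ℕ} (hx : x ∈ Finset.Icc 1 d) : rho d x = x := by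
  simp only [Finset.mem_Icc] at hx
  have h1 : d ≤ x + d - 1 := by omega
  have : (x + d - 1) % d = x - 1 := by
    rw [Nat.mod_eq_sub_mod h1]
    have : x + d - 1 - d = x - 1 := by omega
    rw [this]
    exact Nat.mod_eq_of_lt (by omega)
  simp only [rho, this]
  omega

private lemma rho_congr {d x y : ℕ} (h : x % d = y % d) : rho d x = rho d y := by
  unfold rho
  rcases Nat.eq_zero_or_pos d with hd | hd
  · subst hd; simp at h; omega
  · have hx : x + d - 1 = x + (d - 1) := by omega
    have hy : y + d - 1 = y + (d - 1) := by omega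
    rw [hx, hy, Nat.add_mod, h, ← Nat.add_mod]

private lemma gcd_prod_congr {d : ℕ} {ι : Type*} (s : Finset ι) (f g : ι → ℕ)
    (h : ∀ i ∈ s, f i % d = g i % d) :
    Nat.gcd d (∏ i ∈ s, f i) = Nat.gcd d (∏ i ∈ s, g i) := by
  rw [Nat.gcd_rec d (∏ i ∈ s, f i), Nat.gcd_rec d (∏ i ∈ s, g i),
    Finset.prod_nat_mod s d f, Finset.prod_nat_mod s d g,
    Finset.prod_congr rfl h]

/-- Splitting a sum over tuples of length `r+1`. -/
private lemma sum_piFinset_succ {M : Type*} [AddCommMonoid M] (r : ℕ) (s : Finset ℕ)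
    (f : (Fin (r + 1) → ℕ) → M) :
    ∑ k ∈ Fintype.piFinset (fun _ : Fin (r + 1) => s), f k
      = ∑ a ∈ s, ∑ k ∈ Fintype.piFinset (fun _ : Fin r => s), f (Fin.cons a k) := by
  rw [← Finset.sum_product' s (Fintype.piFinset (fun _ : Fin r => s))
      (fun a k => f (Fin.cons a k))]
  refine Finset.sum_nbij' (fun k => (k 0, Fin.tail k)) (fun q => Fin.cons q.1 q.2)
    ?_ ?_ ?_ ?_ ?_
  · intro k hk
    simp only [Fintype.mem_piFinset] at hk
    simp only [Finset.mem_product, Fintype.mem_piFinset]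
    exact ⟨hk 0, fun i => hk i.succ⟩
  · intro q hq
    simp only [Finset.mem_product, Fintype.mem_piFinset] at hq
    simp only [Fintype.mem_piFinset]
    intro i
    refine Fin.cases ?_ ?_ i
    · simpa using hq.1
    · intro j; simpa using hq.2 j
  · intro k _; exact Fin.cons_self_tail k
  · intro q _; simp
  · intro k _; rw [Fin.cons_self_tail]

/-- Telescoping a function of the capped `p`-adic valuation. -/
private lemma telescope {p : ℕ} (hp : p.Prime) (b : ℕ) {k : ℕ} (hk : 0 < k) (G : ℕ → ℚ) :
    G (min b (k.factorization p))
      = G 0 + ∑ j ∈ Finset.Icc 1 b, (if p ^ j ∣ k then G j - G (j - 1) else 0) := by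
  induction b with
  | zero => simp
  | succ b ih =>
    rw [Finset.sum_Icc_succ_top (by omega)]
    by_cases hd : p ^ (b + 1) ∣ k
    · have hv : b + 1 ≤ k.factorization p := (hp.pow_dvd_iff_le_factorization hk.ne').1 hd
      have h1 : min (b + 1) (k.factorization p) = b + 1 := by omega
      have h2 : min b (k.factorization p) = b := by omega
      rw [h1, if_pos hd]
      rw [h2] at ih
      have hb1 : b + 1 - 1 = b := by omega
      rw [hb1]
      linarith [ih]
    · have hv : k.factorization p ≤ b := by
        by_contra hc
        exact hd ((hp.pow_dvd_iff_le_factorization hk.ne').2 (by omega))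
      have h1 : min (b + 1) (k.factorization p) = min b (k.factorization p) := by omega
      rw [h1, if_neg hd, ih]
      ring

private lemma count_dvd {p : ℕ} (hp : 0 < p) {j a : ℕ} (hja : j ≤ a) :
    ((Finset.Icc 1 (p ^ a)).filter (fun k => p ^ j ∣ k)).card = p ^ (a - j) := by
  have h1 : Finset.Icc 1 (p ^ a) = Finset.Ioc 0 (p ^ a) := rfl
  rw [h1, Nat.Ioc_filter_dvd_card_eq_div, Nat.pow_div hja hp]

/-- Summing a function of the capped valuation over `[1, p^a]`. -/
private lemma sum_Icc_capped {p : ℕ} (hp : p.Prime) {a b : ℕ} (hba : b ≤ a) (c : ℕ → ℚ) :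
    ∑ k ∈ Finset.Icc 1 (p ^ a), c (min b (k.factorization p))
      = (p : ℚ) ^ a * c 0
        + ∑ j ∈ Finset.Icc 1 b, (c j - c (j - 1)) * (p : ℚ) ^ (a - j) := by
  have hrw : ∀ k ∈ Finset.Icc 1 (p ^ a),
      c (min b (k.factorization p))
        = c 0 + ∑ j ∈ Finset.Icc 1 b, (if p ^ j ∣ k then c j - c (j - 1) else 0) := by
    intro k hk
    simp only [Finset.mem_Icc] at hk
    exact telescope hp b (by omega) c
  rw [Finset.sum_congr rfl hrw, Finset.sum_add_distrib, Finset.sum_const,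
    Nat.card_Icc]
  congr 1
  · rw [Nat.add_sub_cancel, nsmul_eq_mul]
    push_cast
    ring
  · rw [Finset.sum_comm]
    refine Finset.sum_congr rfl fun j hj => ?_
    simp only [Finset.mem_Icc] at hj
    rw [← Finset.sum_filter, Finset.sum_const, count_dvd hp.pos (le_trans hj.2 hba),
      nsmul_eq_mul]
    push_cast
    ring

private lemma gcd_pow_eq {p : ℕ} (hp : p.Prime) (b : ℕ) {k : ℕ} (hk : 0 < k) :
    Nat.gcd (p ^ b) k = p ^ (min b (k.factorization p)) := by
  obtain ⟨i, hib, hi⟩ := (Nat.dvd_prime_pow hp).1 (Nat.gcd_dvd_left (p ^ b) k)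
  have hik : p ^ i ∣ k := hi ▸ Nat.gcd_dvd_right (p ^ b) k
  have hiv : i ≤ k.factorization p := (hp.pow_dvd_iff_le_factorization hk.ne').1 hik
  have hle : min b (k.factorization p) ≤ i := by
    have hdvd : p ^ (min b (k.factorization p)) ∣ Nat.gcd (p ^ b) k :=
      Nat.dvd_gcd (pow_dvd_pow p (min_le_left _ _))
        ((pow_dvd_pow p (min_le_right _ _)).trans (Nat.ordProj_dvd k p))
    rw [hi] at hdvd
    exact (Nat.pow_dvd_pow_iff_le_right hp.one_lt).1 hdvd
  rw [hi]
  congr 1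
  omega

private lemma gcd_pow_mul {p : ℕ} (hp : p.Prime) (b : ℕ) {k M : ℕ} (hk : 0 < k) (hM : 0 < M) :
    Nat.gcd (p ^ b) (k * M)
      = p ^ (min b (k.factorization p))
        * Nat.gcd (p ^ (b - min b (k.factorization p))) M := by
  rw [gcd_pow_eq hp b (Nat.mul_pos hk hM), gcd_pow_eq hp _ hM,
    Nat.factorization_mul hk.ne' hM.ne']
  rw [← pow_add]
  congr 1
  simp only [Finsupp.add_apply]
  omega

private def Rq (p b r : ℕ) : ℚ :=
  ∑ l ∈ Finset.range (r + 1), (Nat.multichoose b l : ℚ) * (1 - 1 / (p : ℚ)) ^ l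

private lemma Rq_zero (p r : ℕ) : Rq p 0 r = 1 := by
  unfold Rq
  rw [Finset.sum_eq_single 0]
  · simp
  · intro l _ hl
    obtain ⟨m, rfl⟩ := Nat.exists_eq_succ_of_ne_zero hl
    simp [Nat.multichoose_zero_succ]
  · simp

private lemma multichoose_sum (b l : ℕ) :
    ∑ c ∈ Finset.Icc 1 b, Nat.multichoose c l = Nat.multichoose b (l + 1) := by
  induction b with
  | zero => simp [Nat.multichoose_zero_succ]
  | succ b ih =>
    rw [Finset.sum_Icc_succ_top (by omega), ih, Nat.multichoose_succ_succ]

private lemma Rq_succ (p b r : ℕ) :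
    Rq p b (r + 1) = 1 + (1 - 1 / (p : ℚ)) * ∑ c ∈ Finset.Icc 1 b, Rq p c r := by
  unfold Rq
  rw [Finset.mul_sum]
  have h1 : ∀ c ∈ Finset.Icc 1 b,
      (1 - 1 / (p : ℚ)) * ∑ l ∈ Finset.range (r + 1),
          (Nat.multichoose c l : ℚ) * (1 - 1 / (p : ℚ)) ^ l
        = ∑ l ∈ Finset.range (r + 1),
          (Nat.multichoose c l : ℚ) * (1 - 1 / (p : ℚ)) ^ (l + 1) := by
    intro c _
    rw [Finset.mul_sum]
    exact Finset.sum_congr rfl fun l _ => by ring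
  rw [Finset.sum_congr rfl h1, Finset.sum_comm]
  have h2 : ∀ l ∈ Finset.range (r + 1),
      ∑ c ∈ Finset.Icc 1 b, (Nat.multichoose c l : ℚ) * (1 - 1 / (p : ℚ)) ^ (l + 1)
        = (Nat.multichoose b (l + 1) : ℚ) * (1 - 1 / (p : ℚ)) ^ (l + 1) := by
    intro l _
    rw [← Finset.sum_mul, ← Nat.cast_sum, multichoose_sum]
  rw [Finset.sum_congr rfl h2, Finset.sum_range_succ' (fun l =>
    (Nat.multichoose b l : ℚ) * (1 - 1 / (p : ℚ)) ^ l) (r + 1)]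
  rw [Nat.multichoose_zero_right]
  push_cast
  ring

private lemma sum_Icc_one_eq_range (f : ℕ → ℚ) (b : ℕ) :
    ∑ i ∈ Finset.Icc 1 b, f i = ∑ i ∈ Finset.range b, f (1 + i) := by
  rw [← Finset.Ico_add_one_right_eq_Icc, Finset.sum_Ico_eq_sum_range]
  simp

private lemma sum_Icc_rev (f : ℕ → ℚ) (b : ℕ) :
    ∑ j ∈ Finset.Icc 1 b, f (b - j) = ∑ i ∈ Finset.range b, f i := by
  rw [sum_Icc_one_eq_range (fun j => f (b - j)) b, ← Finset.sum_range_reflect f b]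
  refine Finset.sum_congr rfl fun i hi => ?_
  simp only [Finset.mem_range] at hi
  congr 1
  omega

private lemma sum_Icc_rev' (f : ℕ → ℚ) (b : ℕ) :
    ∑ j ∈ Finset.Icc 1 b, f (b - j + 1) = ∑ j ∈ Finset.Icc 1 b, f j := by
  have h1 := sum_Icc_rev (fun i => f (i + 1)) b
  rw [h1, sum_Icc_one_eq_range f b]
  refine Finset.sum_congr rfl fun i hi => ?_
  congr 1
  omega

private lemma key_sum {p : ℕ} (hp : p.Prime) :
    ∀ r a b : ℕ, b ≤ a →
      ∑ k ∈ Fintype.piFinset (fun _ : Fin r => Finset.Icc 1 (p ^ a)),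
          (Nat.gcd (p ^ b) (∏ i, k i) : ℚ)
        = (p : ℚ) ^ (a * r) * Rq p b r := by
  intro r
  induction r with
  | zero =>
    intro a b _
    have h1 : ∀ k ∈ Fintype.piFinset (fun _ : Fin 0 => Finset.Icc 1 (p ^ a)),
        (Nat.gcd (p ^ b) (∏ i, k i) : ℚ) = 1 := by
      intro k _
      simp
    rw [Finset.sum_congr rfl h1, Finset.sum_const, Fintype.card_piFinset]
    simp [Rq]
  | succ r ih =>
    intro a b hba
    have hpQ : ((p : ℚ)) ≠ 0 := by
      have := hp.pos
      positivity
    set c : ℕ → ℚ := fun j => (p : ℚ) ^ j * ((p : ℚ) ^ (a * r) * Rq p (b - j) r) with hc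
    rw [sum_piFinset_succ]
    have h1 : ∀ k0 ∈ Finset.Icc 1 (p ^ a),
        (∑ k ∈ Fintype.piFinset (fun _ : Fin r => Finset.Icc 1 (p ^ a)),
          (Nat.gcd (p ^ b) (∏ i, (Fin.cons k0 k : Fin (r+1) → ℕ) i) : ℚ))
        = c (min b (k0.factorization p)) := by
      intro k0 hk0
      simp only [Finset.mem_Icc] at hk0
      have hk0pos : 0 < k0 := hk0.1
      have h2 : ∀ k ∈ Fintype.piFinset (fun _ : Fin r => Finset.Icc 1 (p ^ a)),
          (Nat.gcd (p ^ b) (∏ i, (Fin.cons k0 k : Fin (r+1) → ℕ) i) : ℚ)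
          = (p : ℚ) ^ (min b (k0.factorization p))
              * (Nat.gcd (p ^ (b - min b (k0.factorization p))) (∏ i, k i) : ℚ) := by
        intro k hk
        simp only [Fintype.mem_piFinset, Finset.mem_Icc] at hk
        have hM : 0 < ∏ i, k i := Finset.prod_pos (fun i _ => (hk i).1)
        rw [Fin.prod_cons, gcd_pow_mul hp b hk0pos hM]
        push_cast
        ring
      rw [Finset.sum_congr rfl h2, ← Finset.mul_sum,
        ih a (b - min b (k0.factorization p)) (by omega), hc]
    rw [Finset.sum_congr rfl h1, sum_Icc_capped hp hba c]
    -- now pure algebra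
    have e1 : ∀ j ∈ Finset.Icc 1 b, (c j - c (j - 1)) * (p : ℚ) ^ (a - j)
        = (p : ℚ) ^ (a - 1 + a * r) * (p : ℚ) * Rq p (b - j) r
          - (p : ℚ) ^ (a - 1 + a * r) * Rq p (b - j + 1) r := by
      intro j hj
      simp only [Finset.mem_Icc] at hj
      have hja : j ≤ a := le_trans hj.2 hba
      have h₁ : (p : ℚ) ^ j * (p : ℚ) ^ (a - j) = (p : ℚ) ^ (a - 1) * (p : ℚ) := by
        rw [← pow_add, ← pow_succ]
        congr 1
        omega
      have h₂ : (p : ℚ) ^ (j - 1) * (p : ℚ) ^ (a - j) = (p : ℚ) ^ (a - 1) := by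
        rw [← pow_add]
        congr 1
        omega
      have h₃ : b - (j - 1) = b - j + 1 := by omega
      have h₄ : (p : ℚ) ^ (a - 1 + a * r) = (p : ℚ) ^ (a - 1) * (p : ℚ) ^ (a * r) :=
        pow_add _ _ _
      rw [hc]
      simp only [h₃]
      rw [h₄]
      linear_combination ((p : ℚ) ^ (a * r) * Rq p (b - j) r) * h₁
        - ((p : ℚ) ^ (a * r) * Rq p (b - j + 1) r) * h₂
    rw [Finset.sum_congr rfl e1, Finset.sum_sub_distrib, ← Finset.mul_sum, ← Finset.mul_sum,
      sum_Icc_rev (fun i => Rq p i r) b, sum_Icc_rev' (fun i => Rq p i r) b]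
    -- remaining algebra
    have hA : ∑ i ∈ Finset.range b, Rq p i r
        = 1 + (∑ j ∈ Finset.Icc 1 b, Rq p j r) - Rq p b r := by
      have h5 : ∑ i ∈ Finset.range (b + 1), Rq p i r
          = ∑ i ∈ Finset.range b, Rq p i r + Rq p b r := Finset.sum_range_succ _ b
      have h6 : ∑ i ∈ Finset.range (b + 1), Rq p i r
          = ∑ i ∈ Finset.range b, Rq p (i + 1) r + Rq p 0 r := Finset.sum_range_succ' _ b
      have h7 : ∑ i ∈ Finset.range b, Rq p (i + 1) r = ∑ j ∈ Finset.Icc 1 b, Rq p j r := by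
        rw [sum_Icc_one_eq_range (fun j => Rq p j r) b]
        exact Finset.sum_congr rfl fun i _ => by rw [add_comm]
      rw [h7, Rq_zero] at h6
      linarith [h5, h6]
    rw [Rq_succ]
    rcases Nat.eq_zero_or_pos b with hb | hb
    · subst hb
      simp only [Finset.Icc_self, Finset.range_zero, Finset.sum_empty, Rq_zero, hc]
      have : Finset.Icc 1 0 = (∅ : Finset ℕ) := rfl
      rw [this]
      simp only [Finset.sum_empty, Nat.sub_zero, Rq_zero]
      rw [show a * (r + 1) = a + a * r from by ring, pow_add]
      ring
    · have ha : 1 ≤ a := le_trans hb hba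
      have hc0 : c 0 = (p : ℚ) ^ (a * r) * Rq p b r := by
        rw [hc]; simp
      have h8 : (p : ℚ) ^ a * (p : ℚ) ^ (a * r) = (p : ℚ) ^ (a - 1 + a * r) * (p : ℚ) := by
        rw [← pow_add, ← pow_succ]
        congr 1
        omega
      have h9 : (p : ℚ) ^ (a * (r + 1)) = (p : ℚ) ^ (a - 1 + a * r) * (p : ℚ) := by
        rw [← pow_succ]
        congr 1
        ring_nf
        omega
      have h10 : (p : ℚ) ^ a = (p : ℚ) ^ (a - 1) * p := by
        rw [← pow_succ]
        congr 1
        omega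
      rw [hc0, hA, h9, h10, pow_add]
      field_simp
      ring

private lemma piFinset_Icc_zero (r : ℕ) (hr : 0 < r) :
    Fintype.piFinset (fun _ : Fin r => (Finset.Icc 1 0 : Finset ℕ)) = ∅ := by
  apply Finset.eq_empty_of_forall_notMem
  intro f hf
  have := Fintype.mem_piFinset.1 hf ⟨0, hr⟩
  simp at this

private lemma T_mult (r : ℕ) (hr : 0 < r) {m n : ℕ} (h : Nat.Coprime m n) :
    ∑ k ∈ Fintype.piFinset (fun _ : Fin r => Finset.Icc 1 (m * n)),
        Nat.gcd (m * n) (∏ i, k i)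
      = (∑ u ∈ Fintype.piFinset (fun _ : Fin r => Finset.Icc 1 m), Nat.gcd m (∏ i, u i))
        * ∑ v ∈ Fintype.piFinset (fun _ : Fin r => Finset.Icc 1 n), Nat.gcd n (∏ i, v i) := by
  rcases Nat.eq_zero_or_pos m with hm | hm
  · subst hm
    have hn1 : n = 1 := Nat.coprime_zero_left n |>.1 h
    subst hn1
    rw [show (0 * 1 : ℕ) = 0 from rfl, piFinset_Icc_zero r hr]
    simp
  rcases Nat.eq_zero_or_pos n with hn | hn
  · subst hn
    have hm1 : m = 1 := Nat.coprime_zero_right m |>.1 h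
    subst hm1
    rw [show (1 * 0 : ℕ) = 0 from rfl, piFinset_Icc_zero r hr]
    simp
  have hmn : 0 < m * n := Nat.mul_pos hm hn
  rw [Finset.sum_mul_sum, ← Finset.sum_product'
    (Fintype.piFinset (fun _ : Fin r => Finset.Icc 1 m))
    (Fintype.piFinset (fun _ : Fin r => Finset.Icc 1 n))
    (fun u v => Nat.gcd m (∏ i, u i) * Nat.gcd n (∏ i, v i))]
  refine Finset.sum_nbij' (fun k => (fun i => rho m (k i), fun i => rho n (k i)))
    (fun uv => fun i => rho (m * n) ((Nat.chineseRemainder h (uv.1 i) (uv.2 i) : ℕ)))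
    ?_ ?_ ?_ ?_ ?_
  · intro k _
    simp only [Finset.mem_product, Fintype.mem_piFinset]
    exact ⟨fun i => rho_mem hm _, fun i => rho_mem hn _⟩
  · intro uv _
    simp only [Fintype.mem_piFinset]
    exact fun i => rho_mem hmn _
  · intro k hk
    simp only [Fintype.mem_piFinset] at hk
    funext i
    set kk := k i with hkk
    have hmem := hk i
    set c := (Nat.chineseRemainder h (rho m kk) (rho n kk) : ℕ) with hc
    have e1 : c ≡ kk [MOD m] :=
      (Nat.chineseRemainder h (rho m kk) (rho n kk)).2.1.trans (rho_modeq hm kk)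
    have e2 : c ≡ kk [MOD n] :=
      (Nat.chineseRemainder h (rho m kk) (rho n kk)).2.2.trans (rho_modeq hn kk)
    have e3 : c ≡ kk [MOD m * n] := (Nat.modEq_and_modEq_iff_modEq_mul h).1 ⟨e1, e2⟩
    exact (rho_congr e3).trans (rho_eq hmem)
  · intro uv huv
    simp only [Finset.mem_product, Fintype.mem_piFinset] at huv
    refine Prod.ext ?_ ?_
    · funext i
      set c := (Nat.chineseRemainder h (uv.1 i) (uv.2 i) : ℕ) with hc
      have e1 : rho (m * n) c ≡ c [MOD m] :=
        ((rho_modeq hmn c).of_dvd ⟨n, rfl⟩)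
      have e2 : rho (m * n) c ≡ uv.1 i [MOD m] :=
        e1.trans (Nat.chineseRemainder h (uv.1 i) (uv.2 i)).2.1
      exact (rho_congr e2).trans (rho_eq (huv.1 i))
    · funext i
      set c := (Nat.chineseRemainder h (uv.1 i) (uv.2 i) : ℕ) with hc
      have e1 : rho (m * n) c ≡ c [MOD n] :=
        ((rho_modeq hmn c).of_dvd ⟨m, (mul_comm m n)⟩)
      have e2 : rho (m * n) c ≡ uv.2 i [MOD n] :=
        e1.trans (Nat.chineseRemainder h (uv.1 i) (uv.2 i)).2.2
      exact (rho_congr e2).trans (rho_eq (huv.2 i))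
  · intro k hk
    simp only [Fintype.mem_piFinset] at hk
    have step1 : Nat.gcd (m * n) (∏ i, k i) = Nat.gcd m (∏ i, k i) * Nat.gcd n (∏ i, k i) := by
      rw [Nat.gcd_comm (m * n), Nat.Coprime.gcd_mul _ h, Nat.gcd_comm _ m, Nat.gcd_comm _ n]
    rw [step1]
    congr 1
    · exact gcd_prod_congr Finset.univ _ _ (fun i _ => (rho_mod hm (k i)).symm)
    · exact gcd_prod_congr Finset.univ _ _ (fun i _ => (rho_mod hn (k i)).symm)

private def Fsum (r ν : ℕ) : ℚ :=
  ∑ k ∈ Fintype.piFinset (fun _ : Fin r => Finset.Icc 1 ν), (Nat.gcd ν (∏ i, k i) : ℚ)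

private lemma Fsum_mult (r : ℕ) (hr : 0 < r) :
    ∀ x y : ℕ, x.Coprime y → Fsum r (x * y) = Fsum r x * Fsum r y := by
  intro x y hxy
  unfold Fsum
  rw [← Nat.cast_sum, ← Nat.cast_sum, ← Nat.cast_sum, T_mult r hr hxy, Nat.cast_mul]

private lemma Fsum_one (r : ℕ) : Fsum r 1 = 1 := by
  unfold Fsum
  have h1 : ∀ k ∈ Fintype.piFinset (fun _ : Fin r => Finset.Icc 1 1),
      (Nat.gcd 1 (∏ i, k i) : ℚ) = 1 := by
    intro k _
    simp [Nat.gcd_one_left]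
  rw [Finset.sum_congr rfl h1, Finset.sum_const, Fintype.card_piFinset]
  simp

theorem stmt_1 (n r : ℕ) (hn : 0 < n) (hr : 0 < r) :
    (1 / (n : ℚ) ^ r) *
        ∑ k ∈ Fintype.piFinset (fun _ : Fin r => Finset.Icc 1 n),
          (Nat.gcd n (∏ i, k i) : ℚ) =
      ∏ p ∈ n.primeFactors,
        ∑ l ∈ Finset.range (r + 1),
          (Nat.multichoose (n.factorization p) l : ℚ) * (1 - 1 / (p : ℚ)) ^ l := by
  have hfact := Nat.multiplicative_factorization (Fsum r) (Fsum_mult r hr) (Fsum_one r) hn.ne'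
  rw [Nat.prod_factorization_eq_prod_primeFactors] at hfact
  have hprime : ∀ p ∈ n.primeFactors, Fsum r (p ^ n.factorization p)
      = (p : ℚ) ^ (n.factorization p * r) * Rq p (n.factorization p) r := by
    intro p hp
    exact key_sum (Nat.prime_of_mem_primeFactors hp) r _ _ le_rfl
  rw [Finset.prod_congr rfl hprime] at hfact
  have hgoal : (1 / (n : ℚ) ^ r) * Fsum r n
      = ∏ p ∈ n.primeFactors, Rq p (n.factorization p) r := by
    rw [hfact, Finset.prod_mul_distrib]
    have h1 : (n : ℕ) = ∏ p ∈ n.primeFactors, p ^ n.factorization p := by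
      conv_lhs => rw [← Nat.factorization_prod_pow_eq_self hn.ne']
      rw [Nat.prod_factorization_eq_prod_primeFactors]
    have hnn : (n : ℚ) ^ r = ∏ p ∈ n.primeFactors, (p : ℚ) ^ (n.factorization p * r) := by
      calc (n : ℚ) ^ r
          = ((∏ p ∈ n.primeFactors, p ^ n.factorization p : ℕ) : ℚ) ^ r := by rw [← h1]
        _ = ∏ p ∈ n.primeFactors, (p : ℚ) ^ (n.factorization p * r) := by
            push_cast
            rw [← Finset.prod_pow]
            exact Finset.prod_congr rfl fun p _ => by rw [← pow_mul]
    rw [hnn]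
    have hne : (∏ p ∈ n.primeFactors, (p : ℚ) ^ (n.factorization p * r)) ≠ 0 := by
      rw [Finset.prod_ne_zero_iff]
      intro p hp
      have := (Nat.prime_of_mem_primeFactors hp).pos
      positivity
    field_simp
  exact hgoal
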